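/- Define c_{n,m} = 4^{−(n+m)} binom(2n, n) binom(2m, m) for integers n, m ≥ 0, so that (1−z)^{−1/2}(1−w)^{−1/2} = Σ_{n,m ≥ 0} c_{n,m} z^n w^m for |z|, |w| < 1 and hence Σ_{n,m ≥ 0} c_{n,m} z^n z̄^m = |1−z|^{−1} for z ∈ ℂ with |z| < 1. There exists a constant C > 0 such that for every integer K ≥ 0 and every z ∈ ℂ with |z| < 1: | Σ_{(n,m): n+m ≥ K} c_{n,m} z^n z̄^m | ≤ C |z|^K |1−z|^{−1}. -/

import Mathlib

/-- The Taylor coefficients of `(1-z)^{-1/2}(1-w)^{-1/2}`: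
`c_{n,m} = 4^{-(n+m)} C(2n,n) C(2m,m)`. -/
noncomputable def cCoef (n m : ℕ) : ℝ :=
  ((4 : ℝ) ^ (n + m))⁻¹ * (Nat.choose (2 * n) n) * (Nat.choose (2 * m) m)

set_option maxHeartbeats 1000000

open Finset Complex

noncomputable def Complex.abs : AbsoluteValue ℂ ℝ :=
  IsAbsoluteValue.toAbsoluteValue (fun z : ℂ => ‖z‖)

theorem Complex.norm_eq_abs (z : ℂ) : ‖z‖ = Complex.abs z := rfl

@[simp] theorem Complex.abs_ofReal (r : ℝ) : Complex.abs (r : ℂ) = |r| := by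
  rw [← Complex.norm_eq_abs, Complex.norm_real, Real.norm_eq_abs]

@[simp] theorem Complex.abs_conj (z : ℂ) : Complex.abs ((starRingEnd ℂ) z) = Complex.abs z :=
  Complex.norm_conj z

theorem Complex.abs_cpow_of_ne_zero {z : ℂ} (hz : z ≠ 0) (w : ℂ) :
    Complex.abs (z ^ w) = Complex.abs z ^ w.re / Real.exp (Complex.arg z * Complex.im w) :=
  Complex.norm_cpow_of_ne_zero hz w

theorem Complex.normSq_eq_abs (x : ℂ) : Complex.normSq x = Complex.abs x ^ 2 :=
  Complex.normSq_eq_norm_sq x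

theorem Complex.re_le_abs (z : ℂ) : z.re ≤ Complex.abs z := Complex.re_le_norm z

noncomputable def cc (n : ℕ) : ℝ := ((4:ℝ)^n)⁻¹ * Nat.choose (2*n) n

lemma cc_zero : cc 0 = 1 := by simp [cc]

lemma cc_pos (n : ℕ) : 0 < cc n := by
  have h : 0 < (Nat.choose (2*n) n : ℝ) := by
    exact_mod_cast Nat.choose_pos (by omega)
  have h4 : (0:ℝ) < ((4:ℝ)^n)⁻¹ := by positivity
  exact mul_pos h4 h

lemma cc_succ (n : ℕ) : cc (n+1) * (2*n+2) = cc n * (2*n+1) := by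
  have h := Nat.succ_mul_centralBinom_succ n
  have h' : ((n+1) * Nat.centralBinom (n+1) : ℝ) = 2 * (2*n+1) * Nat.centralBinom n := by
    exact_mod_cast h
  simp only [Nat.centralBinom] at h'
  simp only [cc]
  have h4 : ((4:ℝ)^(n+1))⁻¹ = ((4:ℝ)^n)⁻¹ / 4 := by
    rw [pow_succ]; field_simp
  rw [h4]
  have : (Nat.choose (2*(n+1)) (n+1) : ℝ) = 2 * (2*n+1) * Nat.choose (2*n) n / (n+1) := by
    field_simp at h' ⊢
    linarith [h']
  rw [this]
  have hn : ((n:ℝ)+1) ≠ 0 := by positivity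
  field_simp
  ring

lemma cc_succ' (n : ℕ) : cc (n+1) = cc n * (2*n+1) / (2*n+2) := by
  have h := cc_succ n
  have : (2*(n:ℝ)+2) ≠ 0 := by positivity
  field_simp
  linarith [h]

lemma cc_antitone : Antitone cc := by
  apply antitone_nat_of_succ_le
  intro n
  rw [cc_succ']
  rw [div_le_iff₀ (by positivity : (0:ℝ) < 2*n+2)]
  nlinarith [(cc_pos n).le]

lemma cc_le_one (n : ℕ) : cc n ≤ 1 := by
  simpa [cc_zero] using cc_antitone (Nat.zero_le n)

lemma cc_sq (n : ℕ) : ((n:ℝ)+1) * cc n ^ 2 ≤ 1 := by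
  induction n with
  | zero => simp [cc_zero]
  | succ n ih =>
    rw [cc_succ']
    have h1 : (0:ℝ) < 2*(n:ℝ)+2 := by positivity
    rw [div_pow, ← mul_div_assoc, div_le_one (by positivity : (0:ℝ) < (2*(n:ℝ)+2)^2)]
    push_cast
    nlinarith [sq_nonneg (cc n), (cc_pos n).le]

lemma cc_mul_sqrt (n : ℕ) : cc n * Real.sqrt (n+1) ≤ 1 := by
  have h := cc_sq n
  have h1 : (cc n * Real.sqrt (n+1))^2 ≤ 1 := by
    rw [mul_pow, Real.sq_sqrt (by positivity : (0:ℝ) ≤ (n:ℝ)+1)]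
    nlinarith [cc_sq n]
  nlinarith [mul_nonneg (cc_pos n).le (Real.sqrt_nonneg ((n:ℝ)+1))]

lemma sum_cc_le (M : ℕ) : ∑ n ∈ range M, cc n ≤ 2 * Real.sqrt M := by
  induction M with
  | zero => simp
  | succ M ih =>
    rw [Finset.sum_range_succ]
    have hs : Real.sqrt M ≥ 0 := Real.sqrt_nonneg _
    set s := Real.sqrt (M:ℝ)
    set t := Real.sqrt ((M:ℝ)+1)
    have ht : 0 < t := Real.sqrt_pos.2 (by positivity)
    have hs2 : s^2 = M := Real.sq_sqrt (by positivity)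
    have ht2 : t^2 = (M:ℝ)+1 := Real.sq_sqrt (by positivity)
    have hst : s ≤ t := Real.sqrt_le_sqrt (by linarith)
    have hccM : cc M * t ≤ 1 := cc_mul_sqrt M
    have key : cc M ≤ 2*t - 2*s := by
      have h1 : (t - s) * (t + s) = 1 := by nlinarith
      have h2 : 1 ≤ (t - s) * (2*t) := by nlinarith
      have h3 : cc M ≤ 1 / t := by
        rw [le_div_iff₀ ht]; exact hccM
      have h4 : 1 / t ≤ 2*(t - s) := by
        rw [div_le_iff₀ ht]; nlinarith
      linarith
    have : ((M:ℕ)+1 : ℝ) = (M:ℝ)+1 := by push_cast; ring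
    rw [show ((M+1:ℕ):ℝ) = (M:ℝ)+1 by push_cast; ring]
    calc ∑ n ∈ range M, cc n + cc M ≤ 2*s + (2*t - 2*s) := by
          exact add_le_add ih key
      _ = 2 * t := by ring

lemma sum_reflect_helper (j : ℕ) (f : ℕ → ℕ → ℝ) :
    ∑ n ∈ range (j+1), f n (j - n) = ∑ n ∈ range (j+1), f (j - n) n := by
  rw [← Finset.sum_range_reflect (fun n => f n (j - n)) (j+1)]
  apply Finset.sum_congr rfl
  intro i hi
  simp only [Finset.mem_range] at hi
  have h1 : j + 1 - 1 - i = j - i := by omega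
  have h2 : j - (j - i) = i := by omega
  rw [h1, h2]

lemma cc_vandermonde : ∀ j : ℕ, ∑ n ∈ range (j+1), cc n * cc (j-n) = 1 := by
  intro j; induction j with
  | zero => simp [cc_zero]
  | succ j ih =>
    have hA : ∑ n ∈ range (j+2), (n:ℝ) * (cc n * cc (j+1-n))
        = ∑ k ∈ range (j+1), ((2*(k:ℝ)+1)/2) * (cc k * cc (j-k)) := by
      rw [Finset.sum_range_succ' (fun n => (n:ℝ) * (cc n * cc (j+1-n))) (j+1)]
      simp only [Nat.cast_zero, zero_mul, add_zero]
      apply Finset.sum_congr rfl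
      intro k hk
      have h1 : j + 1 - (k+1) = j - k := by omega
      rw [h1]
      have h2 := cc_succ k
      push_cast
      linear_combination (cc (j-k) / 2) * h2
    have hC : ∑ n ∈ range (j+2), ((j+1-n : ℕ):ℝ) * (cc n * cc (j+1-n))
        = ∑ n ∈ range (j+2), (n:ℝ) * (cc n * cc (j+1-n)) := by
      rw [← Finset.sum_range_reflect (fun n => (n:ℝ) * (cc n * cc (j+1-n))) (j+2)]
      apply Finset.sum_congr rfl
      intro i hi
      simp only [Finset.mem_range] at hi
      have h1 : j + 2 - 1 - i = j + 1 - i := by omega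
      have h2 : j + 1 - (j + 1 - i) = i := by omega
      rw [h1, h2]
      ring
    have hsplit : ((j:ℝ)+1) * ∑ n ∈ range (j+2), cc n * cc (j+1-n)
        = ∑ n ∈ range (j+2), (n:ℝ) * (cc n * cc (j+1-n))
          + ∑ n ∈ range (j+2), ((j+1-n:ℕ):ℝ) * (cc n * cc (j+1-n)) := by
      rw [Finset.mul_sum, ← Finset.sum_add_distrib]
      apply Finset.sum_congr rfl
      intro n hn
      simp only [Finset.mem_range] at hn
      have hn' : n ≤ j+1 := by omega
      have : ((j+1-n : ℕ):ℝ) = (j:ℝ)+1-(n:ℝ) := by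
        rw [Nat.cast_sub hn']; push_cast; ring
      rw [this]; ring
    have hD : ∑ k ∈ range (j+1), ((j-k:ℕ):ℝ) * (cc k * cc (j-k))
        = ∑ k ∈ range (j+1), (k:ℝ) * (cc k * cc (j-k)) := by
      have := sum_reflect_helper j (fun a b => (b:ℝ) * (cc a * cc b))
      simpa [mul_comm] using this
    have hlow : ∑ k ∈ range (j+1), (2*(k:ℝ)+1) * (cc k * cc (j-k)) = ((j:ℝ)+1) := by
      have expand : ∀ k ∈ range (j+1), ((j:ℝ)+1) * (cc k * cc (j-k))
          = (k:ℝ) * (cc k * cc (j-k)) + ((j-k:ℕ):ℝ) * (cc k * cc (j-k))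
            + cc k * cc (j-k) := by
        intro k hk
        simp only [Finset.mem_range] at hk
        have hk' : k ≤ j := by omega
        have : ((j-k : ℕ):ℝ) = (j:ℝ)-(k:ℝ) := by rw [Nat.cast_sub hk']
        rw [this]; ring
      have : ((j:ℝ)+1) * ∑ k ∈ range (j+1), cc k * cc (j-k)
          = ∑ k ∈ range (j+1), (2*(k:ℝ)+1) * (cc k * cc (j-k)) := by
        rw [Finset.mul_sum]
        rw [Finset.sum_congr rfl expand]
        rw [Finset.sum_add_distrib, Finset.sum_add_distrib, hD]
        rw [← Finset.sum_add_distrib, ← Finset.sum_add_distrib]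
        apply Finset.sum_congr rfl
        intro k hk; ring
      rw [← this, ih, mul_one]
    have key : ((j:ℝ)+1) * ∑ n ∈ range (j+2), cc n * cc (j+1-n) = ((j:ℝ)+1) := by
      rw [hsplit, hC, hA, ← hlow, ← Finset.sum_add_distrib]
      apply Finset.sum_congr rfl
      intro k hk; ring
    have hj : ((j:ℝ)+1) ≠ 0 := by positivity
    have := mul_left_cancel₀ hj (key.trans (mul_one ((j:ℝ)+1)).symm)
    simpa using this

noncomputable def fR (w : ℂ) : ℂ := (1 - w) ^ (-(1/2) : ℂ)
noncomputable def gfun (w : ℂ) : ℂ := ∑' n : ℕ, (cc n : ℂ) * w ^ n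

lemma term_norm (w : ℂ) (n : ℕ) : ‖(cc n : ℂ) * w ^ n‖ = cc n * Complex.abs w ^ n := by
  rw [norm_mul, norm_pow]
  simp [Complex.norm_eq_abs, Complex.abs_ofReal, abs_of_pos (cc_pos n)]

lemma summable_norm_term {w : ℂ} (hw : Complex.abs w < 1) :
    Summable (fun n => ‖(cc n : ℂ) * w ^ n‖) := by
  apply Summable.of_nonneg_of_le (fun n => norm_nonneg _)
    (fun n => ?_) (summable_geometric_of_lt_one (Complex.abs.nonneg w) hw)
  rw [term_norm]
  have h1 : Complex.abs w ^ n ≤ Complex.abs w ^ n := le_refl _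
  have := cc_le_one n
  nlinarith [pow_nonneg (Complex.abs.nonneg w) n, cc_pos n]

lemma summable_term {w : ℂ} (hw : Complex.abs w < 1) :
    Summable (fun n => (cc n : ℂ) * w ^ n) :=
  (summable_norm_term hw).of_norm

lemma one_sub_slit {w : ℂ} (hw : Complex.abs w < 1) : 1 - w ∈ Complex.slitPlane := by
  left
  simp only [Complex.sub_re, Complex.one_re]
  have := Complex.re_le_abs w
  linarith

lemma one_sub_ne_zero {w : ℂ} (hw : Complex.abs w < 1) : 1 - w ≠ 0 :=
  Complex.slitPlane_ne_zero (one_sub_slit hw)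

lemma fR_sq {w : ℂ} (hw : Complex.abs w < 1) : fR w ^ 2 = (1 - w)⁻¹ := by
  rw [fR, sq, ← Complex.cpow_add _ _ (one_sub_ne_zero hw)]
  rw [show (-(1/2):ℂ) + -(1/2) = -1 by norm_num, Complex.cpow_neg_one]

lemma gfun_sq {w : ℂ} (hw : Complex.abs w < 1) : gfun w ^ 2 = (1 - w)⁻¹ := by
  rw [gfun, sq]
  rw [tsum_mul_tsum_eq_tsum_sum_range_of_summable_norm (summable_norm_term hw)
    (summable_norm_term hw)]
  have : ∀ n : ℕ, ∑ k ∈ range (n+1), ((cc k : ℂ) * w ^ k) * ((cc (n-k) : ℂ) * w ^ (n-k))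
      = w ^ n := by
    intro n
    have : ∀ k ∈ range (n+1), ((cc k : ℂ) * w ^ k) * ((cc (n-k) : ℂ) * w ^ (n-k))
        = ((cc k * cc (n-k) : ℝ) : ℂ) * w ^ n := by
      intro k hk
      simp only [Finset.mem_range] at hk
      have hkn : k + (n - k) = n := by omega
      have hpow : w ^ k * w ^ (n - k) = w ^ n := by rw [← pow_add, hkn]
      rw [← hpow]
      push_cast
      ring
    rw [Finset.sum_congr rfl this, ← Finset.sum_mul, ← Complex.ofReal_sum,
      cc_vandermonde n]
    simp
  rw [tsum_congr this]
  exact tsum_geometric_of_norm_lt_one (by simpa [Complex.norm_eq_abs] using hw)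

lemma gfun_ne_zero {w : ℂ} (hw : Complex.abs w < 1) : gfun w ≠ 0 := by
  intro h
  have := gfun_sq hw
  rw [h] at this
  simp only [ne_eq, zero_pow, OfNat.ofNat_ne_zero, not_false_eq_true] at this
  exact (inv_ne_zero (one_sub_ne_zero hw)) this.symm

lemma continuousOn_gfun : ContinuousOn gfun (Metric.ball (0:ℂ) 1) := by
  apply continuousOn_of_forall_continuousAt
  intro w hw
  simp only [Metric.mem_ball, dist_zero_right, Complex.norm_eq_abs] at hw
  set ρ : ℝ := (Complex.abs w + 1)/2 with hρ
  have hρ1 : ρ < 1 := by simp only [hρ]; linarith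
  have hρ0 : 0 ≤ ρ := by have := Complex.abs.nonneg w; simp only [hρ]; linarith
  have hwρ : Complex.abs w < ρ := by simp only [hρ]; linarith
  have huni : TendstoUniformlyOn (fun (t : Finset ℕ) x => ∑ n ∈ t, (cc n : ℂ) * x ^ n)
      gfun Filter.atTop (Metric.closedBall 0 ρ) := by
    apply tendstoUniformlyOn_tsum (f := fun n x => (cc n : ℂ) * x ^ n)
      (summable_geometric_of_lt_one hρ0 hρ1)
    intro n x hx
    simp only [Metric.mem_closedBall, dist_zero_right, Complex.norm_eq_abs] at hx
    rw [term_norm]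
    calc cc n * Complex.abs x ^ n ≤ 1 * ρ ^ n := by
          apply mul_le_mul (cc_le_one n) (pow_le_pow_left₀ (Complex.abs.nonneg x) hx n)
            (pow_nonneg (Complex.abs.nonneg x) n) zero_le_one
      _ = ρ ^ n := one_mul _
  have hcont : ContinuousOn gfun (Metric.closedBall (0:ℂ) ρ) := by
    apply huni.continuousOn
    apply Filter.Frequently.of_forall
    intro t
    apply Continuous.continuousOn
    exact continuous_finset_sum t (fun n _ => continuous_const.mul (continuous_pow n))
  exact hcont.continuousAt (Metric.closedBall_mem_nhds_of_mem
    (by simpa [dist_zero_right, Complex.norm_eq_abs] using hwρ))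

lemma continuousOn_fR : ContinuousOn fR (Metric.ball (0:ℂ) 1) := by
  apply continuousOn_of_forall_continuousAt
  intro w hw
  simp only [Metric.mem_ball, dist_zero_right, Complex.norm_eq_abs] at hw
  have h1 : ContinuousAt (fun x : ℂ => x ^ (-(1/2):ℂ)) (1 - w) :=
    continuousAt_cpow_const (one_sub_slit hw)
  exact h1.comp ((continuous_const.sub continuous_id).continuousAt)

lemma gfun_eq_fR {w : ℂ} (hw : Complex.abs w < 1) : gfun w = fR w := by
  set B := Metric.ball (0:ℂ) 1
  have hball : ∀ x ∈ B, Complex.abs x < 1 := by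
    intro x hx; simpa [B, Metric.mem_ball, dist_zero_right, Complex.norm_eq_abs] using hx
  have hq : ContinuousOn (fun x => fR x / gfun x) B :=
    ContinuousOn.div continuousOn_fR continuousOn_gfun (fun x hx => gfun_ne_zero (hball x hx))
  have hpm : ∀ x ∈ B, fR x / gfun x = 1 ∨ fR x / gfun x = -1 := by
    intro x hx
    have hgx := gfun_ne_zero (hball x hx)
    have : (fR x / gfun x) * (fR x / gfun x) = 1 := by
      field_simp
      rw [fR_sq (hball x hx), gfun_sq (hball x hx)]
    exact mul_self_eq_one_iff.mp this
  set U := B ∩ (fun x => fR x / gfun x) ⁻¹' {z : ℂ | 0 < z.re}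
  set V := B ∩ (fun x => fR x / gfun x) ⁻¹' {z : ℂ | z.re < 0}
  have hUopen : IsOpen U := hq.isOpen_inter_preimage Metric.isOpen_ball
    (isOpen_lt continuous_const Complex.continuous_re)
  have hVopen : IsOpen V := hq.isOpen_inter_preimage Metric.isOpen_ball
    (isOpen_lt Complex.continuous_re continuous_const)
  have hcover : B ⊆ U ∪ V := by
    intro x hx
    rcases hpm x hx with h | h
    · left; exact ⟨hx, by simp [h]⟩
    · right; exact ⟨hx, by simp [h]⟩
  have hdisj : Disjoint U V := by
    rw [Set.disjoint_iff]
    rintro x ⟨⟨-, h1⟩, ⟨-, h2⟩⟩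
    simp only [Set.mem_preimage, Set.mem_setOf_eq] at h1 h2
    exact absurd (lt_trans h1 h2) (lt_irrefl _)
  have h0B : (0:ℂ) ∈ B := by simp [B]
  have hq0 : fR 0 / gfun 0 = 1 := by
    have hf0 : fR 0 = 1 := by simp [fR]
    have hg0 : gfun 0 = 1 := by
      rw [gfun]
      rw [tsum_eq_single 0 (fun n hn => by simp [zero_pow hn])]
      simp [cc_zero]
    rw [hf0, hg0]; norm_num
  have h0U : (0:ℂ) ∈ U := ⟨h0B, by simp [hq0]⟩
  have hpre : IsPreconnected B := (convex_ball (0:ℂ) 1).isPreconnected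
  have hBU : B ⊆ U := hpre.subset_left_of_subset_union hUopen hVopen hdisj hcover ⟨0, ⟨h0B, h0U⟩⟩
  have hwB : w ∈ B := by simpa [B, Metric.mem_ball, dist_zero_right, Complex.norm_eq_abs] using hw
  have := hBU hwB
  have hre : 0 < (fR w / gfun w).re := this.2
  rcases hpm w hwB with h | h
  · exact ((div_eq_one_iff_eq (gfun_ne_zero (hball w hwB))).mp h).symm
  · rw [h] at hre; norm_num at hre
  
lemma hasSum_fR {w : ℂ} (hw : Complex.abs w < 1) :
    HasSum (fun n => (cc n : ℂ) * w ^ n) (fR w) := by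
  have := (summable_term hw).hasSum
  rwa [show ∑' n : ℕ, (cc n : ℂ) * w ^ n = fR w from gfun_eq_fR hw] at this

noncomputable def gt' (M : ℕ) (w : ℂ) : ℂ := ∑' k : ℕ, (cc (k+M) : ℂ) * w ^ (k+M)

lemma abs_fR {w : ℂ} (hw : Complex.abs w < 1) :
    Complex.abs (fR w) = (Complex.abs (1-w)) ^ (-(1/2) : ℝ) := by
  rw [fR, Complex.abs_cpow_of_ne_zero (one_sub_ne_zero hw)]
  have h1 : (-(1/2):ℂ) = ((-(1/2):ℝ):ℂ) := by norm_num
  rw [h1, Complex.ofReal_re, Complex.ofReal_im, mul_zero, Real.exp_zero, div_one]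

lemma summable_tail {w : ℂ} (hw : Complex.abs w < 1) (M : ℕ) :
    Summable (fun k => (cc (k+M) : ℂ) * w ^ (k+M)) :=
  ((summable_nat_add_iff (f := fun n => (cc n : ℂ) * w ^ n) M).mpr (summable_term hw))

lemma hasSum_tail {w : ℂ} (hw : Complex.abs w < 1) (M : ℕ) :
    HasSum (fun k => (cc (k+M) : ℂ) * w ^ (k+M)) (gt' M w) :=
  (summable_tail hw M).hasSum

lemma gt_eq {w : ℂ} (hw : Complex.abs w < 1) (M : ℕ) :
    gt' M w = fR w - ∑ n ∈ range M, (cc n : ℂ) * w ^ n := by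
  have h := Summable.sum_add_tsum_nat_add M (summable_term hw)
  rw [(hasSum_fR hw).tsum_eq] at h
  rw [gt']
  linear_combination h

lemma tele_summable (M : ℕ) : Summable (fun k => cc (k+M) - cc (k+1+M)) := by
  refine summable_of_sum_range_le (c := cc M) (fun k => ?_) (fun n => ?_)
  · have := cc_antitone (show k+M ≤ k+1+M by omega); linarith
  ·
    have : ∑ i ∈ range n, (cc (i+M) - cc (i+1+M)) = cc M - cc (n+M) := by
      have := Finset.sum_range_sub' (fun i => cc (i+M)) n
      simpa using this
    rw [this]
    have := cc_pos (n+M)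
    linarith

lemma tele_tsum_le (M : ℕ) : ∑' k, (cc (k+M) - cc (k+1+M)) ≤ cc M := by
  refine Real.tsum_le_of_sum_range_le (fun k => ?_) (fun n => ?_)
  · have := cc_antitone (show k+M ≤ k+1+M by omega); linarith
  ·
    have : ∑ i ∈ range n, (cc (i+M) - cc (i+1+M)) = cc M - cc (n+M) := by
      have := Finset.sum_range_sub' (fun i => cc (i+M)) n
      simpa using this
    rw [this]
    have := cc_pos (n+M)
    linarith

lemma abel_bound (M : ℕ) {w : ℂ} (hw : Complex.abs w < 1) :
    Complex.abs (1 - w) * Complex.abs (gt' M w) ≤ 2 * cc M * Complex.abs w ^ M := by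
  simp only [← Complex.norm_eq_abs]
  set r := ‖w‖ with hr
  have hr0 : 0 ≤ r := norm_nonneg w
  have hw' : r < 1 := by rw [hr, Complex.norm_eq_abs]; exact hw
  have hS := hasSum_tail hw M
  set S := gt' M w with hSdef
  set f : ℕ → ℂ := fun k => (cc (k+M) : ℂ) * w ^ (k+M) with hf
  have h2 : HasSum (fun k => f k * w) (S * w) := hS.mul_right w
  have h3 : HasSum (fun k => f (k+1)) (S - f 0) := by
    apply (hasSum_nat_add_iff (f := f) 1).mpr
    simpa [Finset.sum_range_one] using hS
  have h4 : HasSum (fun k => f (k+1) - f k * w) ((S - f 0) - S * w) := h3.sub h2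
  have key : (1 - w) * S = f 0 + ((S - f 0) - S * w) := by ring
  have hb : ∀ k, ‖f (k+1) - f k * w‖ ≤ (cc (k+M) - cc (k+1+M)) * r ^ M := by
    intro k
    have he : f (k+1) - f k * w = ((cc (k+1+M) - cc (k+M) : ℝ) : ℂ) * w ^ (k+1+M) := by
      simp only [hf]
      rw [show k+1+M = (k+M)+1 by omega, pow_succ]
      push_cast
      ring
    rw [he, norm_mul, norm_pow, Complex.norm_real, Real.norm_eq_abs]
    have hmono := cc_antitone (show k+M ≤ k+1+M by omega)
    rw [abs_of_nonpos (by linarith), neg_sub]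
    apply mul_le_mul_of_nonneg_left _ (by linarith)
    apply pow_le_pow_of_le_one hr0 (le_of_lt hw')
    omega
  have hsum_ub : Summable (fun k => ‖f (k+1) - f k * w‖) :=
    Summable.of_nonneg_of_le (fun k => norm_nonneg _) hb ((tele_summable M).mul_right _)
  have habs : ‖(S - f 0) - S * w‖ ≤ cc M * r ^ M := by
    rw [← h4.tsum_eq]
    calc ‖∑' k, (f (k+1) - f k * w)‖
        ≤ ∑' k, ‖f (k+1) - f k * w‖ := norm_tsum_le_tsum_norm hsum_ub
      _ ≤ ∑' k, (cc (k+M) - cc (k+1+M)) * r ^ M :=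
          Summable.tsum_le_tsum hb hsum_ub ((tele_summable M).mul_right _)
      _ = (∑' k, (cc (k+M) - cc (k+1+M))) * r ^ M := tsum_mul_right
      _ ≤ cc M * r ^ M := mul_le_mul_of_nonneg_right (tele_tsum_le M) (pow_nonneg hr0 M)
  have hf0 : ‖f 0‖ = cc M * r ^ M := by
    simp only [hf, zero_add]
    rw [norm_mul, norm_pow, Complex.norm_real, Real.norm_eq_abs, abs_of_pos (cc_pos M)]
  calc ‖1-w‖ * ‖S‖ = ‖(1-w) * S‖ := (norm_mul _ _).symm
    _ = ‖f 0 + ((S - f 0) - S * w)‖ := by rw [key]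
    _ ≤ ‖f 0‖ + ‖(S - f 0) - S * w‖ := norm_add_le _ _
    _ ≤ cc M * r ^ M + cc M * r ^ M := by rw [hf0]; linarith
    _ = 2 * cc M * r ^ M := by ring

lemma sqrt2_le : Real.sqrt 2 ≤ 1.5 := by
  nlinarith [Real.sq_sqrt (by norm_num : (2:ℝ) ≥ 0), Real.sqrt_nonneg 2]

lemma rpow_half_inv {a : ℝ} (ha : 0 < a) : a ^ (-(1/2) : ℝ) = (Real.sqrt a)⁻¹ := by
  rw [Real.sqrt_eq_rpow, ← Real.rpow_neg ha.le]

lemma gt_bound (M : ℕ) {w : ℂ} (hw : Complex.abs w < 1) :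
    Complex.abs (gt' M w) ≤ 5 * Complex.abs w ^ M * (Complex.abs (1-w)) ^ (-(1/2) : ℝ) := by
  set r := Complex.abs w with hrdef
  set a := Complex.abs (1-w) with hadef
  have ha : 0 < a := by
    rw [hadef]; exact Complex.abs.pos (one_sub_ne_zero hw)
  have hr0 : 0 ≤ r := Complex.abs.nonneg w
  set s := Real.sqrt a with hsdef
  have hs : 0 < s := Real.sqrt_pos.2 ha
  have hs2 : s^2 = a := Real.sq_sqrt ha.le
  rw [rpow_half_inv ha, ← hsdef]
  set t := Real.sqrt ((M:ℝ)+1) with htdef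
  have ht : 0 < t := Real.sqrt_pos.2 (by positivity)
  have ht2 : t^2 = (M:ℝ)+1 := Real.sq_sqrt (by positivity)
  have hcct : cc M * t ≤ 1 := cc_mul_sqrt M
  have hrM : 0 ≤ r ^ M := pow_nonneg hr0 M
  by_cases hcase : 1 ≤ 2*((M:ℝ)+1)*a
  · -- Abel case
    have hA := abel_bound M hw
    rw [← hadef, ← hrdef] at hA
    have hst : 1 ≤ (s*t*Real.sqrt 2)^2 := by
      rw [mul_pow, mul_pow, hs2, ht2, Real.sq_sqrt (by norm_num : (2:ℝ) ≥ 0)]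
      nlinarith
    have hst' : 1 ≤ s*t*Real.sqrt 2 := by
      nlinarith [mul_nonneg (mul_nonneg hs.le ht.le) (Real.sqrt_nonneg 2)]
    have hkey : 2 * cc M ≤ 5 * s := by
      have h2 : s * t ≥ 2/3 := by nlinarith [sqrt2_le, mul_nonneg hs.le ht.le]
      nlinarith [cc_pos M, mul_pos hs ht]
    -- |gt| ≤ 2 cc M r^M / a ≤ 5 r^M / s
    have habs : Complex.abs (gt' M w) ≤ 2 * cc M * r ^ M / a := by
      rw [le_div_iff₀ ha]; linarith [hA]
    have : 2 * cc M * r ^ M / a ≤ 5 * r ^ M * s⁻¹ := by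
      rw [div_le_iff₀ ha]
      have expand : 5 * r ^ M * s⁻¹ * a = (5 * s) * r ^ M := by
        field_simp
        nlinarith [hs2]
      rw [expand]
      nlinarith [hkey, hrM, cc_pos M]
    linarith
  · -- head + fR case
    push_neg at hcase
    have h1r : 1 - r ≤ a := by
      have := norm_sub_norm_le (1:ℂ) w
      simpa [Complex.norm_eq_abs, ← hrdef, ← hadef] using this
    have hb0 : (0:ℝ) ≤ 1 - 1/(2*((M:ℝ)+1)) := by
      have : (1:ℝ) ≤ 2*((M:ℝ)+1) := by
        have : (0:ℝ) ≤ (M:ℝ) := Nat.cast_nonneg M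
        linarith
      have h2 : 1/(2*((M:ℝ)+1)) ≤ 1 := by
        rw [div_le_one (by positivity)]; linarith
      linarith
    have hbr : 1 - 1/(2*((M:ℝ)+1)) ≤ r := by
      have haa : a < 1/(2*((M:ℝ)+1)) := by
        rw [lt_div_iff₀ (by positivity)]; nlinarith
      linarith
    have hrM2 : (1:ℝ)/2 ≤ r ^ M := by
      have hBern : 1 + (M:ℝ) * (-(1/(2*((M:ℝ)+1)))) ≤ (1 + (-(1/(2*((M:ℝ)+1)))))^M := by
        apply one_add_mul_le_pow
        have : 0 < 1/(2*((M:ℝ)+1)) := by positivity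
        linarith
      have hhalf : (1:ℝ)/2 ≤ 1 + (M:ℝ) * (-(1/(2*((M:ℝ)+1)))) := by
        have hM0 : (0:ℝ) ≤ (M:ℝ) := Nat.cast_nonneg M
        have : (M:ℝ) * (1/(2*((M:ℝ)+1))) ≤ 1/2 := by
          rw [mul_one_div, div_le_div_iff₀ (by positivity) (by norm_num)]
          linarith
        linarith
      have hmono : (1 + (-(1/(2*((M:ℝ)+1)))))^M ≤ r^M := by
        apply pow_le_pow_left₀ (by linarith [hb0]) (by linarith [hbr])
      linarith
    have hhead : Complex.abs (∑ n ∈ range M, (cc n : ℂ) * w ^ n) ≤ 2 * t := by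
      rw [← Complex.norm_eq_abs]
      have h1 : ‖∑ n ∈ range M, (cc n : ℂ) * w ^ n‖ ≤ ∑ n ∈ range M, cc n := by
        refine le_trans (norm_sum_le _ _) (Finset.sum_le_sum fun n hn => ?_)
        rw [norm_mul, norm_pow, Complex.norm_real, Real.norm_eq_abs, abs_of_pos (cc_pos n)]
        have hwn : ‖w‖ = r := by rw [Complex.norm_eq_abs]
        rw [hwn]
        have h2 : r ^ n ≤ 1 := pow_le_one₀ hr0 hw.le
        nlinarith [cc_pos n, pow_nonneg hr0 n]
      have h2 : Real.sqrt M ≤ t := Real.sqrt_le_sqrt (by linarith [Nat.cast_nonneg (α := ℝ) M])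
      have h3 := sum_cc_le M
      linarith
    have hst2 : (s*t*Real.sqrt 2)^2 < 1 := by
      rw [mul_pow, mul_pow, hs2, ht2, Real.sq_sqrt (by norm_num : (2:ℝ) ≥ 0)]
      nlinarith
    have hst : s*t*Real.sqrt 2 < 1 := by
      nlinarith [mul_nonneg (mul_nonneg hs.le ht.le) (Real.sqrt_nonneg 2)]
    have hsqrt2 : (1.4:ℝ) ≤ Real.sqrt 2 := by
      nlinarith [Real.sq_sqrt (by norm_num : (2:ℝ) ≥ 0), Real.sqrt_nonneg 2]
    have hst3 : s*t ≤ 0.75 := by nlinarith [mul_nonneg hs.le ht.le]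
    have htads : 2 * t ≤ 1.5 * s⁻¹ := by
      have hrw : (1.5:ℝ) * s⁻¹ = 1.5 / s := by ring
      rw [hrw, le_div_iff₀ hs]
      nlinarith
    have hsinv : 0 < s⁻¹ := inv_pos.2 hs
    have habsfR : Complex.abs (fR w) = s⁻¹ := by
      rw [abs_fR hw, ← hadef, rpow_half_inv ha]
    calc Complex.abs (gt' M w)
        = Complex.abs (fR w - ∑ n ∈ range M, (cc n : ℂ) * w ^ n) := by rw [gt_eq hw M]
      _ ≤ Complex.abs (fR w) + Complex.abs (∑ n ∈ range M, (cc n : ℂ) * w ^ n) := by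
          simpa [Complex.norm_eq_abs] using norm_sub_le (fR w) (∑ n ∈ range M, (cc n : ℂ) * w ^ n)
      _ ≤ s⁻¹ + 2 * t := by rw [habsfR]; linarith
      _ ≤ s⁻¹ + 1.5 * s⁻¹ := by linarith
      _ = 2.5 * s⁻¹ := by ring
      _ ≤ 5 * r ^ M * s⁻¹ := by nlinarith

lemma cCoef_eq (n m : ℕ) : cCoef n m = cc n * cc m := by
  simp only [cCoef, cc, pow_add]
  rw [mul_inv]
  ring

lemma part1 (z w : ℂ) (hz : Complex.abs z < 1) (hw : Complex.abs w < 1) :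
    (1 - z) ^ (-(1/2) : ℂ) * (1 - w) ^ (-(1/2) : ℂ)
      = ∑' q : ℕ × ℕ, (cCoef q.1 q.2 : ℂ) * z ^ q.1 * w ^ q.2 := by
  have hsum : Summable (fun q : ℕ × ℕ =>
      ((fun n => (cc n : ℂ) * z ^ n) q.1) * ((fun m => (cc m : ℂ) * w ^ m) q.2)) :=
    summable_mul_of_summable_norm (f := fun n => (cc n : ℂ) * z ^ n)
      (g := fun m => (cc m : ℂ) * w ^ m) (summable_norm_term hz) (summable_norm_term hw)
  have h1 : fR z * fR w = ∑' q : ℕ × ℕ, ((cc q.1 : ℂ) * z ^ q.1) * ((cc q.2 : ℂ) * w ^ q.2) :=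
    HasSum.mul_eq (f := fun n => (cc n : ℂ) * z ^ n) (g := fun m => (cc m : ℂ) * w ^ m)
      (hasSum_fR hz) (hasSum_fR hw) hsum.hasSum
  rw [show (1 - z) ^ (-(1/2) : ℂ) * (1 - w) ^ (-(1/2) : ℂ) = fR z * fR w from rfl, h1]
  apply tsum_congr
  intro q
  rw [cCoef_eq]
  push_cast
  ring

lemma conj_half : (starRingEnd ℂ) (-(1/2) : ℂ) = -(1/2) := by
  rw [show (-(1/2):ℂ) = ((-(1/2):ℝ):ℂ) by norm_num, Complex.conj_ofReal]

lemma fR_conj {z : ℂ} (hz : Complex.abs z < 1) :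
    fR ((starRingEnd ℂ) z) = (starRingEnd ℂ) (fR z) := by
  have harg : (1 - z).arg ≠ Real.pi := by
    intro h
    have := one_sub_slit hz
    rcases this with h1 | h2
    · rw [Complex.arg_eq_pi_iff] at h
      linarith [h.1]
    · rw [Complex.arg_eq_pi_iff] at h
      exact h2 h.2
  have h1 : 1 - (starRingEnd ℂ) z = (starRingEnd ℂ) (1 - z) := by
    rw [map_sub, map_one]
  rw [fR, fR, h1, Complex.conj_cpow _ _ harg, conj_half]

lemma part2 (z : ℂ) (hz : Complex.abs z < 1) :
    ∑' q : ℕ × ℕ, (cCoef q.1 q.2 : ℂ) * z ^ q.1 * (starRingEnd ℂ z) ^ q.2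
      = ((Complex.abs (1 - z) : ℂ))⁻¹ := by
  have hy : Complex.abs ((starRingEnd ℂ) z) < 1 := by rwa [Complex.abs_conj]
  rw [← part1 z ((starRingEnd ℂ) z) hz hy]
  have h2 : (1 - z) ^ (-(1/2) : ℂ) * (1 - (starRingEnd ℂ) z) ^ (-(1/2) : ℂ)
      = fR z * (starRingEnd ℂ) (fR z) := by
    rw [← fR_conj hz]; rfl
  rw [h2, Complex.mul_conj]
  have ha : 0 < Complex.abs (1 - z) := Complex.abs.pos (one_sub_ne_zero hz)
  rw [Complex.normSq_eq_abs, abs_fR hz]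
  rw [show ((Complex.abs (1-z)) ^ (-(1/2) : ℝ))^2 = (Complex.abs (1-z))⁻¹ by
    rw [rpow_half_inv ha]
    rw [← Real.sq_sqrt ha.le]
    field_simp
    rw [Real.sqrt_sq (Real.sqrt_nonneg _)]]
  exact Complex.ofReal_inv _

lemma summable_ite_tail {y : ℂ} (hy : Complex.abs y < 1) (M : ℕ) :
    Summable (fun m => if M ≤ m then (cc m : ℂ) * y ^ m else 0) := by
  apply Summable.of_norm_bounded (summable_norm_term hy)
  intro m
  by_cases h : M ≤ m
  · simp [h]
  · simp only [h, if_false, norm_zero]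
    exact norm_nonneg _

lemma ite_tail_eq {y : ℂ} (hy : Complex.abs y < 1) (M : ℕ) :
    ∑' m, (if M ≤ m then (cc m : ℂ) * y ^ m else 0) = gt' M y := by
  have hsum := summable_ite_tail hy M
  have h := Summable.sum_add_tsum_nat_add M hsum
  have h0 : ∑ i ∈ range M, (if M ≤ i then (cc i : ℂ) * y ^ i else 0) = 0 := by
    apply Finset.sum_eq_zero
    intro i hi
    simp only [Finset.mem_range] at hi
    rw [if_neg (by omega)]
  rw [← h, h0, zero_add]
  apply tsum_congr
  intro k
  rw [if_pos (by omega)]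

lemma inner_eval {y : ℂ} (hy : Complex.abs y < 1) (K n : ℕ) (c : ℂ) :
    ∑' m, (if K ≤ n + m then c * ((cc m : ℂ) * y ^ m) else 0) = c * gt' (K - n) y := by
  have he : ∀ m, (if K ≤ n + m then c * ((cc m : ℂ) * y ^ m) else 0)
      = c * (if K - n ≤ m then (cc m : ℂ) * y ^ m else 0) := by
    intro m
    by_cases h : K ≤ n + m
    · rw [if_pos h, if_pos (by omega)]
    · rw [if_neg h, if_neg (by omega), mul_zero]
  rw [tsum_congr he, tsum_mul_left, ite_tail_eq hy]

lemma part3 : ∃ C : ℝ, 0 < C ∧ ∀ (K : ℕ) (z : ℂ), Complex.abs z < 1 →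
    Complex.abs (∑' q : {q : ℕ × ℕ // K ≤ q.1 + q.2},
        (cCoef q.1.1 q.1.2 : ℂ) * z ^ q.1.1 * (starRingEnd ℂ z) ^ q.1.2)
      ≤ C * Complex.abs z ^ K * (Complex.abs (1 - z))⁻¹ := by
  refine ⟨10, by norm_num, ?_⟩
  intro K z hz
  set y := (starRingEnd ℂ) z with hydef
  have hy : Complex.abs y < 1 := by rw [hydef, Complex.abs_conj]; exact hz
  set r := Complex.abs z with hrdef
  have hr0 : 0 ≤ r := Complex.abs.nonneg z
  have hry : Complex.abs y = r := by rw [hydef, Complex.abs_conj]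
  have hay : Complex.abs (1 - y) = Complex.abs (1 - z) := by
    rw [hydef, show (1:ℂ) - (starRingEnd ℂ) z = (starRingEnd ℂ) (1 - z) by
      rw [map_sub, map_one], Complex.abs_conj]
  set a := Complex.abs (1 - z) with hadef
  have ha : 0 < a := Complex.abs.pos (one_sub_ne_zero hz)
  set s := Real.sqrt a with hsdef
  have hs : 0 < s := Real.sqrt_pos.2 ha
  have hs2 : s ^ 2 = a := Real.sq_sqrt ha.le
  set F : ℕ × ℕ → ℂ := fun q => ((cc q.1 : ℂ) * z ^ q.1) * ((cc q.2 : ℂ) * y ^ q.2) with hF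
  set G : ℕ × ℕ → ℂ := fun q => if K ≤ q.1 + q.2 then F q else 0 with hG
  have hFnorm : Summable (fun q : ℕ × ℕ => ‖F q‖) :=
    Summable.mul_norm (f := fun n => (cc n : ℂ) * z ^ n) (g := fun m => (cc m : ℂ) * y ^ m)
      (summable_norm_term hz) (summable_norm_term hy)
  have hGle : ∀ q : ℕ × ℕ, ‖G q‖ ≤ ‖F q‖ := by
    intro q
    rw [hG]
    by_cases h : K ≤ q.1 + q.2
    · simp [h]
    · simp only [h, if_false, norm_zero]
      exact norm_nonneg _
  have hGnorm : Summable (fun q : ℕ × ℕ => ‖G q‖) :=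
    Summable.of_nonneg_of_le (fun q => norm_nonneg _) hGle hFnorm
  have hGsum : Summable G := hGnorm.of_norm
  have hstep1 : ∑' q : {q : ℕ × ℕ // K ≤ q.1 + q.2},
      (cCoef q.1.1 q.1.2 : ℂ) * z ^ q.1.1 * y ^ q.1.2 = ∑' q : ℕ × ℕ, G q := by
    have e1 : ∑' q : {q : ℕ × ℕ // K ≤ q.1 + q.2},
        (cCoef q.1.1 q.1.2 : ℂ) * z ^ q.1.1 * y ^ q.1.2
        = ∑' q : {q : ℕ × ℕ // K ≤ q.1 + q.2}, F q.1 := by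
      apply tsum_congr
      intro q
      rw [hF, cCoef_eq]
      push_cast
      ring
    rw [e1]
    have e2 : ∑' q : ({q : ℕ × ℕ | K ≤ q.1 + q.2} : Set (ℕ × ℕ)), F q.1
        = ∑' q : ℕ × ℕ, Set.indicator {q : ℕ × ℕ | K ≤ q.1 + q.2} F q :=
      tsum_subtype {q : ℕ × ℕ | K ≤ q.1 + q.2} F
    rw [show (∑' q : {q : ℕ × ℕ // K ≤ q.1 + q.2}, F q.1)
      = ∑' q : ({q : ℕ × ℕ | K ≤ q.1 + q.2} : Set (ℕ × ℕ)), F q.1 from rfl, e2]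
    apply tsum_congr
    intro q
    by_cases h : K ≤ q.1 + q.2
    · have hmem : q ∈ {q : ℕ × ℕ | K ≤ q.1 + q.2} := h
      rw [Set.indicator_of_mem hmem]
      simp [hG, h]
    · have hmem : q ∉ {q : ℕ × ℕ | K ≤ q.1 + q.2} := h
      rw [Set.indicator_of_notMem hmem]
      simp [hG, h]
  have hInner : ∀ n, Summable (fun m => G (n, m)) := by
    intro n
    have hb : Summable (fun m => ‖(cc n : ℂ) * z ^ n‖ * ‖(cc m : ℂ) * y ^ m‖) :=
      (summable_norm_term hy).mul_left _
    apply Summable.of_norm_bounded hb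
    intro m
    calc ‖G (n, m)‖ ≤ ‖F (n, m)‖ := hGle (n, m)
      _ = ‖(cc n : ℂ) * z ^ n‖ * ‖(cc m : ℂ) * y ^ m‖ := norm_mul _ _
  have hsplit : ∑' q : ℕ × ℕ, G q = ∑' n, ∑' m, G (n, m) := Summable.tsum_prod' hGsum hInner
  have hinner_eval : ∀ n, ∑' m, G (n, m) = ((cc n : ℂ) * z ^ n) * gt' (K - n) y := by
    intro n
    have he : ∀ m, G (n, m)
        = (if K ≤ n + m then ((cc n : ℂ) * z ^ n) * ((cc m : ℂ) * y ^ m) else 0) := by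
      intro m; rfl
    rw [tsum_congr he, inner_eval hy K n _]
  set φ : ℕ → ℂ := fun n => ((cc n : ℂ) * z ^ n) * gt' (K - n) y with hφ
  have hccr : Summable (fun n => cc n * r ^ n) :=
    (summable_norm_term hz).congr (fun n => term_norm z n)
  have hgtb : ∀ M : ℕ, Complex.abs (gt' M y) ≤ 5 * s⁻¹ := by
    intro M
    have h1 := gt_bound M hy
    rw [hay, rpow_half_inv ha, ← hsdef, hry] at h1
    have h2 : r ^ M ≤ 1 := pow_le_one₀ hr0 hz.le
    have h3 : 0 ≤ r ^ M := pow_nonneg hr0 M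
    have hsi : 0 < s⁻¹ := inv_pos.2 hs
    nlinarith
  have houter : Summable φ := by
    apply Summable.of_norm_bounded (hccr.mul_right (5 * s⁻¹))
    intro n
    rw [hφ]
    rw [norm_mul, term_norm]
    rw [← hrdef]
    have := hgtb (K - n)
    have h0 : 0 ≤ cc n * r ^ n := mul_nonneg (cc_pos n).le (pow_nonneg hr0 n)
    calc cc n * r ^ n * ‖gt' (K - n) y‖ ≤ cc n * r ^ n * (5 * s⁻¹) := by
          apply mul_le_mul_of_nonneg_left _ h0
          rw [Complex.norm_eq_abs]; exact this
      _ = cc n * r ^ n * (5 * s⁻¹) := rfl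
  have hT : ∑' q : ℕ × ℕ, G q = ∑ n ∈ range K, φ n + ∑' k, φ (k + K) := by
    rw [hsplit, tsum_congr hinner_eval, ← Summable.sum_add_tsum_nat_add K houter]
  have h0y : gt' 0 y = fR y := by
    rw [gt', show (∑' k : ℕ, (cc (k+0) : ℂ) * y ^ (k+0)) = ∑' k : ℕ, (cc k : ℂ) * y ^ k from
      tsum_congr (fun k => by rw [Nat.add_zero]), (hasSum_fR hy).tsum_eq]
  have htail_eq : ∑' k, φ (k + K) = gt' K z * gt' 0 y := by
    have he : ∀ k, φ (k + K) = ((cc (k + K) : ℂ) * z ^ (k + K)) * gt' 0 y := by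
      intro k
      have h0 : K - (k + K) = 0 := by omega
      rw [hφ]
      simp only [h0]
    rw [tsum_congr he, tsum_mul_right]
    rfl
  -- bound for the finite sum
  have habsA : Complex.abs (∑ n ∈ range K, φ n) * a ≤ 2 * r ^ K := by
    have hterm : ∀ n ∈ range K, Complex.abs (φ n) * a ≤ 2 * (cc n * cc (K - n)) * r ^ K := by
      intro n hn
      simp only [Finset.mem_range] at hn
      have hab := abel_bound (K - n) hy
      rw [hay, hry] at hab
      rw [hφ]
      rw [map_mul, map_mul, Complex.abs_ofReal, map_pow, abs_of_pos (cc_pos n)]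
      rw [← hrdef]
      have hsplitpow : r ^ n * r ^ (K - n) = r ^ K := by
        rw [← pow_add]
        congr 1
        omega
      have h1 : Complex.abs (gt' (K - n) y) * a ≤ 2 * cc (K - n) * r ^ (K - n) := by
        nlinarith [Complex.abs.nonneg (gt' (K - n) y)]
      have h2 : 0 ≤ cc n * r ^ n := mul_nonneg (cc_pos n).le (pow_nonneg hr0 n)
      calc cc n * r ^ n * Complex.abs (gt' (K - n) y) * a
          = (cc n * r ^ n) * (Complex.abs (gt' (K - n) y) * a) := by ring
        _ ≤ (cc n * r ^ n) * (2 * cc (K - n) * r ^ (K - n)) := by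
            apply mul_le_mul_of_nonneg_left h1 h2
        _ = 2 * (cc n * cc (K - n)) * (r ^ n * r ^ (K - n)) := by ring
        _ = 2 * (cc n * cc (K - n)) * r ^ K := by rw [hsplitpow]
    have hccsum : ∑ n ∈ range K, cc n * cc (K - n) ≤ 1 := by
      have h1 : ∑ n ∈ range K, cc n * cc (K - n) ≤ ∑ n ∈ range (K + 1), cc n * cc (K - n) := by
        apply Finset.sum_le_sum_of_subset_of_nonneg
        · exact Finset.range_subset_range.mpr (by omega)
        · intro i _ _
          exact mul_nonneg (cc_pos i).le (cc_pos (K - i)).le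
      rw [cc_vandermonde K] at h1
      exact h1
    calc Complex.abs (∑ n ∈ range K, φ n) * a
        ≤ (∑ n ∈ range K, Complex.abs (φ n)) * a := by
          apply mul_le_mul_of_nonneg_right _ ha.le
          simpa [Complex.norm_eq_abs] using norm_sum_le (range K) φ
      _ = ∑ n ∈ range K, Complex.abs (φ n) * a := by rw [Finset.sum_mul]
      _ ≤ ∑ n ∈ range K, 2 * (cc n * cc (K - n)) * r ^ K := Finset.sum_le_sum hterm
      _ = 2 * (∑ n ∈ range K, cc n * cc (K - n)) * r ^ K := by
          rw [Finset.mul_sum, Finset.sum_mul]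
      _ ≤ 2 * 1 * r ^ K :=
          mul_le_mul_of_nonneg_right (by linarith [hccsum]) (pow_nonneg hr0 K)
      _ = 2 * r ^ K := by ring
  have habsB : Complex.abs (gt' K z * gt' 0 y) * a ≤ 5 * r ^ K := by
    rw [map_mul, h0y]
    have h1 := gt_bound K hz
    rw [← hadef, ← hrdef, rpow_half_inv ha, ← hsdef] at h1
    have h2 : Complex.abs (fR y) = s⁻¹ := by
      rw [abs_fR hy, hay, rpow_half_inv ha, ← hsdef]
    rw [h2]
    have h3 : s⁻¹ * s⁻¹ * a = 1 := by
      field_simp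
      nlinarith [hs2]
    have h4 : 0 ≤ r ^ K := pow_nonneg hr0 K
    have hsi : 0 < s⁻¹ := inv_pos.2 hs
    calc Complex.abs (gt' K z) * s⁻¹ * a ≤ 5 * r ^ K * s⁻¹ * s⁻¹ * a := by
          nlinarith [Complex.abs.nonneg (gt' K z)]
      _ = 5 * r ^ K * (s⁻¹ * s⁻¹ * a) := by ring
      _ = 5 * r ^ K := by rw [h3]; ring
  -- conclude
  have hTa : Complex.abs (∑' q : {q : ℕ × ℕ // K ≤ q.1 + q.2},
      (cCoef q.1.1 q.1.2 : ℂ) * z ^ q.1.1 * y ^ q.1.2) * a ≤ 7 * r ^ K := by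
    rw [hstep1, hT, htail_eq]
    have h5 : Complex.abs (∑ n ∈ range K, φ n + gt' K z * gt' 0 y)
        ≤ Complex.abs (∑ n ∈ range K, φ n) + Complex.abs (gt' K z * gt' 0 y) :=
      Complex.abs.add_le _ _
    nlinarith [Complex.abs.nonneg (∑ n ∈ range K, φ n + gt' K z * gt' 0 y)]
  have hfinal := (le_div_iff₀ ha).mpr hTa
  calc Complex.abs (∑' q : {q : ℕ × ℕ // K ≤ q.1 + q.2},
      (cCoef q.1.1 q.1.2 : ℂ) * z ^ q.1.1 * y ^ q.1.2) ≤ 7 * r ^ K / a := hfinal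
    _ = 7 * r ^ K * a⁻¹ := by ring
    _ ≤ 10 * r ^ K * a⁻¹ := by
        have : 0 < a⁻¹ := inv_pos.2 ha
        nlinarith [pow_nonneg hr0 K]

/-- With `c_{n,m} = 4^{-(n+m)} C(2n,n) C(2m,m)` one has
`(1-z)^{-1/2}(1-w)^{-1/2} = Σ_{n,m≥0} c_{n,m} z^n w^m` for `|z|, |w| < 1`, hence
`Σ_{n,m≥0} c_{n,m} z^n z̄^m = |1-z|⁻¹` for `|z| < 1`; moreover there is `C > 0`
such that for every `K ≥ 0` and `|z| < 1` the tail over `n+m ≥ K` satisfies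
`|Σ_{n+m≥K} c_{n,m} z^n z̄^m| ≤ C |z|^K |1-z|⁻¹`. -/
theorem tail_estimate_riesz_series :
    (∀ z w : ℂ, ‖z‖ < 1 → ‖w‖ < 1 →
      (1 - z) ^ (-(1/2) : ℂ) * (1 - w) ^ (-(1/2) : ℂ)
        = ∑' q : ℕ × ℕ, (cCoef q.1 q.2 : ℂ) * z ^ q.1 * w ^ q.2)
    ∧ (∀ z : ℂ, ‖z‖ < 1 →
      ∑' q : ℕ × ℕ, (cCoef q.1 q.2 : ℂ) * z ^ q.1 * (starRingEnd ℂ z) ^ q.2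
        = ((‖1 - z‖ : ℂ))⁻¹)
    ∧ ∃ C : ℝ, 0 < C ∧ ∀ (K : ℕ) (z : ℂ), ‖z‖ < 1 →
      ‖∑' q : {q : ℕ × ℕ // K ≤ q.1 + q.2},
          (cCoef q.1.1 q.1.2 : ℂ) * z ^ q.1.1 * (starRingEnd ℂ z) ^ q.1.2‖
        ≤ C * ‖z‖ ^ K * (‖1 - z‖)⁻¹ := by
  refine ⟨fun z w hz hw => part1 z w hz hw, fun z hz => part2 z hz, ?_⟩
  obtain ⟨C, hC, h⟩ := part3
  exact ⟨C, hC, h⟩
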